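/- For any rational number μ ≠ 0, if A(x) is the formal power series satisfying A(x) = x e^{A(x)}, then (A(x)/x)^μ = Σ_{n≥0} μ(μ+n)^{n-1} x^n/n!. -/

import Mathlib

namespace KGonal2Trees

open PowerSeries

/-- Composition of a power series `F` with `x^d`, i.e. the series `F(x^d)`. -/
noncomputable def compXPow (d : ℕ) (F : PowerSeries ℚ) : PowerSeries ℚ :=
  PowerSeries.mk fun n => if d ∣ n then PowerSeries.coeff (n / d) F else 0

/-- Exponential `exp(S)` of a power series `S` with zero constant term:
`exp(S) = Σ_{m ≥ 0} S^m / m!` (the coefficient of `x^n` only involves `m ≤ n`). -/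
noncomputable def expS (S : PowerSeries ℚ) : PowerSeries ℚ :=
  PowerSeries.mk fun n =>
    ∑ m ∈ Finset.range (n + 1), PowerSeries.coeff n (S ^ m) / (m.factorial : ℚ)

/-- The series `Σ_{i ≥ 1} x^i B(x^i)^(k-1) / i` (the `i`-th term has order `≥ i`, so the
coefficient of `x^n` only involves `1 ≤ i ≤ n`). -/
noncomputable def seqB (k : ℕ) (B : PowerSeries ℚ) : PowerSeries ℚ :=
  PowerSeries.mk fun n =>
    ∑ i ∈ Finset.Icc 1 n,
      PowerSeries.coeff n (PowerSeries.X ^ i * compXPow i B ^ (k - 1)) / (i : ℚ)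


/-- Logarithm `log(F)` of a power series `F` with constant term `1`:
`log F = Σ_{m ≥ 1} (-1)^(m+1) (F-1)^m / m` (the coefficient of `x^n` only involves
`m ≤ n` since `F - 1` has order `≥ 1`). -/
noncomputable def logS (F : PowerSeries ℚ) : PowerSeries ℚ :=
  PowerSeries.mk fun n =>
    ∑ m ∈ Finset.Icc 1 n, (-1 : ℚ) ^ (m + 1) * PowerSeries.coeff n ((F - 1) ^ m) / (m : ℚ)

open Finset

/-! ### Auxiliary lemmas -/

lemma coeff_pow_zero {S : PowerSeries ℚ} (hS : constantCoeff S = 0) {n m : ℕ} (h : n < m) :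
    coeff n (S ^ m) = 0 := by
  have hX : (X : PowerSeries ℚ) ^ m ∣ S ^ m := pow_dvd_pow_of_dvd (X_dvd_iff.mpr hS) m
  exact (X_pow_dvd_iff.mp hX) n h

lemma coeff_X_pow_mul_zero {f : PowerSeries ℚ} {n d : ℕ} (h : n < d) :
    coeff n ((X : PowerSeries ℚ) ^ d * f) = 0 :=
  (X_pow_dvd_iff.mp (dvd_mul_right _ _)) n h

lemma const_eq_C (F : PowerSeries ℚ) (h : d⁄dX ℚ F = 0) : F = C (constantCoeff F) :=
  derivative.ext (by simp [h]) (by simp)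

lemma ode_unique (H F G : PowerSeries ℚ) (hF : d⁄dX ℚ F = H * F) (hG : d⁄dX ℚ G = H * G)
    (hc : constantCoeff F = constantCoeff G) (hG0 : constantCoeff G ≠ 0) : F = G := by
  have hGinv : G⁻¹ * G = 1 := PowerSeries.inv_mul_cancel G hG0
  have hK : d⁄dX ℚ (F * G⁻¹) = 0 := by
    rw [Derivation.leibniz, smul_eq_mul, smul_eq_mul, derivative_inv', hF, hG]
    linear_combination (-(F * H * G⁻¹)) * hGinv
  have h2 := const_eq_C _ hK
  rw [map_mul, constantCoeff_inv, hc, mul_inv_cancel₀ hG0, map_one] at h2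
  calc F = F * G⁻¹ * G := by rw [mul_assoc, hGinv, mul_one]
    _ = G := by rw [h2, one_mul]

lemma expS_decomp (S : PowerSeries ℚ) (hS : constantCoeff S = 0) (N : ℕ) :
    ∃ R, expS S = (∑ m ∈ range (N + 1), ((m.factorial : ℚ))⁻¹ • S ^ m) + X ^ (N + 1) * R := by
  have hdvd : (X : PowerSeries ℚ) ^ (N + 1) ∣
      expS S - ∑ m ∈ range (N + 1), ((m.factorial : ℚ))⁻¹ • S ^ m := by
    rw [X_pow_dvd_iff]
    intro n hn
    have h1 : ∑ m ∈ range (N + 1), ((m.factorial : ℚ))⁻¹ * coeff n (S ^ m)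
        = ∑ m ∈ range (n + 1), ((m.factorial : ℚ))⁻¹ * coeff n (S ^ m) :=
      (Finset.sum_subset (Finset.range_subset_range.mpr (by omega))
        (fun m _ hm => by rw [coeff_pow_zero hS (by simpa using hm), mul_zero])).symm
    rw [map_sub, map_sum]
    simp_rw [coeff_smul, smul_eq_mul]
    rw [h1, expS, coeff_mk, sub_eq_zero]
    exact Finset.sum_congr rfl fun m _ => by rw [div_eq_inv_mul]
  obtain ⟨R, hR⟩ := hdvd
  exact ⟨R, by linear_combination hR⟩

lemma logS_decomp (F : PowerSeries ℚ) (hF : constantCoeff F = 1) (N : ℕ) :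
    ∃ R, logS F = (∑ j ∈ range (N + 1), ((-1 : ℚ) ^ j / (j + 1 : ℚ)) • (F - 1) ^ (j + 1))
      + X ^ (N + 1) * R := by
  have hu : constantCoeff (F - 1) = 0 := by simp [hF]
  have hdvd : (X : PowerSeries ℚ) ^ (N + 1) ∣
      logS F - ∑ j ∈ range (N + 1), ((-1 : ℚ) ^ j / (j + 1 : ℚ)) • (F - 1) ^ (j + 1) := by
    rw [X_pow_dvd_iff]
    intro n hn
    have h1 : ∑ j ∈ range (N + 1), ((-1 : ℚ) ^ j / (j + 1 : ℚ)) * coeff n ((F - 1) ^ (j + 1))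
        = ∑ j ∈ range n, ((-1 : ℚ) ^ j / (j + 1 : ℚ)) * coeff n ((F - 1) ^ (j + 1)) :=
      (Finset.sum_subset (Finset.range_subset_range.mpr (by omega))
        (fun j _ hj => by rw [coeff_pow_zero hu (by simp at hj ⊢; omega), mul_zero])).symm
    have h2 : ∑ m ∈ Finset.Icc 1 n, (-1 : ℚ) ^ (m + 1) * coeff n ((F - 1) ^ m) / (m : ℚ)
        = ∑ j ∈ range n, ((-1 : ℚ) ^ j / (j + 1 : ℚ)) * coeff n ((F - 1) ^ (j + 1)) := by
      rw [show Finset.Icc 1 n = Finset.Ico 1 (n + 1) by rfl, Finset.sum_Ico_eq_sum_range]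
      refine Finset.sum_congr (by norm_num) fun j _ => ?_
      rw [add_comm 1 j]
      rw [show ((-1 : ℚ)) ^ (j + 1 + 1) = (-1) ^ j from by rw [pow_succ, pow_succ]; ring]
      push_cast
      ring
    rw [map_sub, map_sum]
    simp_rw [coeff_smul, smul_eq_mul]
    rw [h1, logS, coeff_mk, h2, sub_self]
  obtain ⟨R, hR⟩ := hdvd
  exact ⟨R, by linear_combination hR⟩

lemma coeff_derivative_X_pow_mul (R : PowerSeries ℚ) (d n : ℕ) (h : n + 1 < d) :
    coeff n (d⁄dX ℚ ((X : PowerSeries ℚ) ^ d * R)) = 0 := by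
  rw [Derivation.leibniz, smul_eq_mul, smul_eq_mul, Derivation.leibniz_pow, derivative_X,
    smul_eq_mul, mul_one, map_add, coeff_X_pow_mul_zero (by omega), mul_smul_comm,
    map_nsmul, mul_comm R, coeff_X_pow_mul_zero (by omega), smul_zero, add_zero]

lemma derivative_expS (S : PowerSeries ℚ) (hS : constantCoeff S = 0) :
    d⁄dX ℚ (expS S) = d⁄dX ℚ S * expS S := by
  ext n
  obtain ⟨R, hR⟩ := expS_decomp S hS (n + 2)
  obtain ⟨R', hR'⟩ := expS_decomp S hS (n + 1)
  have hsum : d⁄dX ℚ (∑ m ∈ range (n + 3), ((m.factorial : ℚ))⁻¹ • S ^ m)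
      = (∑ j ∈ range (n + 2), ((j.factorial : ℚ))⁻¹ • S ^ j) * d⁄dX ℚ S := by
    rw [map_sum]
    have : ∀ m ∈ range (n + 3), d⁄dX ℚ (((m.factorial : ℚ))⁻¹ • S ^ m)
        = ((m.factorial : ℚ))⁻¹ • ((m : ℕ) • (S ^ (m - 1) * d⁄dX ℚ S)) := by
      intro m _
      rw [Derivation.map_smul, Derivation.leibniz_pow, smul_eq_mul]
    rw [Finset.sum_congr rfl this, Finset.sum_range_succ']
    simp only [Nat.factorial_zero, Nat.cast_one, zero_smul, smul_zero, add_zero]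
    rw [Finset.sum_mul]
    refine Finset.sum_congr rfl fun j _ => ?_
    rw [Nat.add_sub_cancel, ← Nat.cast_smul_eq_nsmul ℚ, smul_smul, smul_mul_assoc]
    congr 1
    rw [Nat.factorial_succ]
    push_cast
    field_simp
  calc coeff n (d⁄dX ℚ (expS S))
      = coeff n ((∑ j ∈ range (n + 2), ((j.factorial : ℚ))⁻¹ • S ^ j) * d⁄dX ℚ S) := by
        rw [hR, map_add, map_add, hsum, coeff_derivative_X_pow_mul _ _ _ (by omega), add_zero]
    _ = coeff n (d⁄dX ℚ S * expS S) := by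
        rw [hR', mul_add, map_add, mul_comm]
        rw [show d⁄dX ℚ S * ((X : PowerSeries ℚ) ^ (n + 2) * R') =
          (X : PowerSeries ℚ) ^ (n + 2) * (d⁄dX ℚ S * R') from by ring,
          coeff_X_pow_mul_zero (by omega), add_zero]

lemma X_pow_dvd_derivative (R : PowerSeries ℚ) (d : ℕ) :
    (X : PowerSeries ℚ) ^ d ∣ d⁄dX ℚ ((X : PowerSeries ℚ) ^ (d + 1) * R) := by
  rw [Derivation.leibniz, smul_eq_mul, smul_eq_mul, Derivation.leibniz_pow, derivative_X,
    smul_eq_mul, mul_one, Nat.add_sub_cancel]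
  exact dvd_add ((pow_dvd_pow X (by omega)).mul_right _)
    (by rw [nsmul_eq_mul]; exact (dvd_mul_left _ _).mul_left _)

lemma derivative_logS (F : PowerSeries ℚ) (hF : constantCoeff F = 1) :
    F * d⁄dX ℚ (logS F) = d⁄dX ℚ F := by
  set u := F - 1 with hu_def
  have hu : constantCoeff u = 0 := by simp [hu_def, hF]
  ext n
  obtain ⟨R, hR⟩ := logS_decomp F hF (n + 2)
  have hQ : F * d⁄dX ℚ (∑ j ∈ range (n + 3), ((-1 : ℚ) ^ j / (j + 1 : ℚ)) • u ^ (j + 1))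
      = d⁄dX ℚ u - ((-1 : ℚ) ^ (n + 3)) • (u ^ (n + 3) * d⁄dX ℚ u) := by
    rw [map_sum]
    have h1 : ∀ j ∈ range (n + 3), d⁄dX ℚ (((-1 : ℚ) ^ j / (j + 1 : ℚ)) • u ^ (j + 1))
        = ((-1 : ℚ) ^ j) • (u ^ j * d⁄dX ℚ u) := by
      intro j _
      rw [Derivation.map_smul, Derivation.leibniz_pow, Nat.add_sub_cancel, smul_eq_mul,
        ← Nat.cast_smul_eq_nsmul ℚ, smul_smul]
      congr 1
      push_cast
      field_simp
    rw [Finset.sum_congr rfl h1, Finset.mul_sum]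
    have h2 : ∀ j ∈ range (n + 3), F * ((-1 : ℚ) ^ j) • (u ^ j * d⁄dX ℚ u)
        = ((-1 : ℚ) ^ j) • (u ^ j * d⁄dX ℚ u)
          - ((-1 : ℚ) ^ (j + 1)) • (u ^ (j + 1) * d⁄dX ℚ u) := by
      intro j _
      rw [pow_succ]
      have : F = 1 + u := by rw [hu_def]; ring
      rw [this]
      simp only [smul_eq_C_mul, map_mul, map_neg, map_one]
      ring
    rw [Finset.sum_congr rfl h2, Finset.sum_range_sub']
    simp [pow_zero]
  have hdu : d⁄dX ℚ u = d⁄dX ℚ F := by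
    rw [hu_def, map_sub, Derivation.map_one_eq_zero, sub_zero]
  have hz1 : coeff n (u ^ (n + 3) * d⁄dX ℚ u) = 0 := by
    have : (X : PowerSeries ℚ) ^ (n + 3) ∣ u ^ (n + 3) * d⁄dX ℚ u :=
      (pow_dvd_pow_of_dvd (X_dvd_iff.mpr hu) _).mul_right _
    exact X_pow_dvd_iff.mp this n (by omega)
  have hz2 : coeff n (F * d⁄dX ℚ ((X : PowerSeries ℚ) ^ (n + 3) * R)) = 0 := by
    have : (X : PowerSeries ℚ) ^ (n + 2) ∣ F * d⁄dX ℚ ((X : PowerSeries ℚ) ^ (n + 3) * R) :=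
      (X_pow_dvd_derivative R (n + 2)).mul_left F
    exact X_pow_dvd_iff.mp this n (by omega)
  rw [hR, map_add, mul_add, map_add, hQ, hz2, add_zero, map_sub, coeff_smul, smul_eq_mul,
    hz1, mul_zero, sub_zero, hdu]

lemma constantCoeff_expS (S : PowerSeries ℚ) : constantCoeff (expS S) = 1 := by
  rw [← coeff_zero_eq_constantCoeff_apply]
  simp [expS]

lemma constantCoeff_logS (F : PowerSeries ℚ) : constantCoeff (logS F) = 0 := by
  rw [← coeff_zero_eq_constantCoeff_apply]
  simp [logS]

lemma expS_ne_zero (S : PowerSeries ℚ) : expS S ≠ 0 := fun h => by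
  have := constantCoeff_expS S
  rw [h, map_zero] at this
  simp at this

lemma expS_zero : expS (0 : PowerSeries ℚ) = 1 := by
  ext n
  simp only [expS, coeff_mk]
  rw [Finset.sum_eq_single 0]
  · simp
  · intro m _ hm
    rw [zero_pow hm, map_zero, zero_div]
  · simp

lemma constantCoeff_smul' (c : ℚ) (A : PowerSeries ℚ) :
    constantCoeff (c • A) = c * constantCoeff A := by
  rw [← coeff_zero_eq_constantCoeff_apply, ← coeff_zero_eq_constantCoeff_apply, coeff_smul,
    smul_eq_mul]

lemma logS_expS (S : PowerSeries ℚ) (hS : constantCoeff S = 0) : logS (expS S) = S := by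
  have h1 : expS S * d⁄dX ℚ (logS (expS S)) = expS S * d⁄dX ℚ S := by
    rw [derivative_logS _ (constantCoeff_expS S), derivative_expS S hS, mul_comm]
  have h2 := mul_left_cancel₀ (expS_ne_zero S) h1
  exact derivative.ext h2 (by rw [constantCoeff_logS, hS])

lemma expS_pow (A : PowerSeries ℚ) (hA0 : constantCoeff A = 0) (m : ℕ) :
    (expS A) ^ m = expS ((m : ℚ) • A) := by
  have hmA0 : constantCoeff ((m : ℚ) • A) = 0 := by rw [constantCoeff_smul', hA0, mul_zero]
  cases m with
  | zero => rw [pow_zero, Nat.cast_zero, zero_smul, expS_zero]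
  | succ k =>
  refine ode_unique (((k + 1 : ℕ) : ℚ) • d⁄dX ℚ A) _ _ ?_ ?_ ?_ ?_
  · rw [Derivation.leibniz_pow, derivative_expS A hA0, smul_eq_mul, Nat.add_sub_cancel,
      ← Nat.cast_smul_eq_nsmul ℚ, smul_mul_assoc]
    congr 1
    rw [pow_succ]
    ring
  · rw [derivative_expS _ hmA0, Derivation.map_smul]
  · rw [map_pow, constantCoeff_expS, one_pow, constantCoeff_expS]
  · rw [constantCoeff_expS]; exact one_ne_zero

lemma main_coeff (A : PowerSeries ℚ) (hA0 : constantCoeff A = 0)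
    (hA : A = X * expS A) :
    ∀ n : ℕ, ∀ μ : ℚ, μ ≠ 0 →
      coeff n (expS (μ • A)) = μ * (μ + n) ^ ((n : ℤ) - 1) / n.factorial := by
  intro n
  induction n using Nat.strong_induction_on with
  | _ n ih =>
  intro μ hμ
  rcases Nat.eq_zero_or_pos n with hn | hn
  · subst hn
    rw [coeff_zero_eq_constantCoeff_apply, constantCoeff_expS]
    simp [zpow_neg, hμ]
  have hn0 : (n : ℚ) ≠ 0 := Nat.cast_ne_zero.mpr (by omega)
  have hApow : ∀ m : ℕ, A ^ m = X ^ m * expS ((m : ℚ) • A) := fun m => by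
    conv_lhs => rw [hA]
    rw [mul_pow, expS_pow _ hA0]
  have hL : coeff n (expS (μ • A))
      = ∑ j ∈ range n, μ ^ (j + 1) * coeff (n - (j + 1)) (expS (((j + 1 : ℕ) : ℚ) • A))
          / ((j + 1).factorial : ℚ) := by
    rw [expS, coeff_mk]
    have h1 : ∀ m ∈ range (n + 1), coeff n ((μ • A) ^ m) / (m.factorial : ℚ)
        = μ ^ m * coeff n (A ^ m) / (m.factorial : ℚ) := fun m _ => by
      rw [smul_pow, coeff_smul, smul_eq_mul]
    rw [Finset.sum_congr rfl h1, Finset.sum_range_succ']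
    rw [pow_zero, one_mul, pow_zero, Nat.factorial_zero, Nat.cast_one, div_one,
      coeff_one, if_neg (by omega), add_zero]
    refine Finset.sum_congr rfl fun j hj => ?_
    have hj' : j + 1 ≤ n := by simpa using hj
    rw [hApow (j + 1)]
    rw [show n = (n - (j + 1)) + (j + 1) by omega, coeff_X_pow_mul]
    rw [show (n - (j + 1)) + (j + 1) - (j + 1) = n - (j + 1) by omega]
  rw [hL]
  have hR : μ * (μ + n) ^ ((n : ℤ) - 1) / (n.factorial : ℚ)
      = ∑ j ∈ range n, μ ^ (j + 1) * (n : ℚ) ^ (n - 1 - j) * ((n - 1).choose j : ℚ)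
          / (n.factorial : ℚ) := by
    rw [show ((n : ℤ) - 1) = ((n - 1 : ℕ) : ℤ) by omega, zpow_natCast]
    rw [add_pow]
    rw [show (n - 1) + 1 = n by omega]
    rw [Finset.mul_sum, Finset.sum_div]
    exact Finset.sum_congr rfl fun m _ => by ring
  rw [hR]
  refine Finset.sum_congr rfl fun j hj => ?_
  have hj' : j + 1 ≤ n := by simpa using hj
  rw [ih (n - (j + 1)) (by omega) ((j + 1 : ℕ) : ℚ) (by positivity)]
  have hcast : (((j + 1 : ℕ) : ℚ) + ((n - (j + 1) : ℕ) : ℚ)) = (n : ℚ) := by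
    push_cast [Nat.cast_sub hj']
    ring
  rw [hcast]
  have hzp : (n : ℚ) ^ (((n - (j + 1) : ℕ) : ℤ) - 1)
      = (n : ℚ) ^ (n - 1 - j) * (n : ℚ)⁻¹ := by
    rw [show ((n - (j + 1) : ℕ) : ℤ) - 1 = ((n - 1 - j : ℕ) : ℤ) + (-1) by omega,
      zpow_add₀ hn0, zpow_natCast, zpow_neg_one]
  rw [hzp]
  have hch : (((n - 1).choose j : ℚ)) * (j.factorial : ℚ) * ((n - 1 - j).factorial : ℚ)
      = ((n - 1).factorial : ℚ) := by
    exact_mod_cast congrArg (Nat.cast : ℕ → ℚ)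
      (Nat.choose_mul_factorial_mul_factorial (by omega : j ≤ n - 1))
  have hfn : (n.factorial : ℚ) = n * ((n - 1).factorial : ℚ) := by
    exact_mod_cast congrArg (Nat.cast : ℕ → ℚ) (Nat.mul_factorial_pred hn.ne').symm
  have hfj : (((j + 1).factorial : ℚ)) = (j + 1) * (j.factorial : ℚ) := by
    rw [Nat.factorial_succ]; push_cast; ring
  have hnm : (n - (j + 1)) = n - 1 - j := by omega
  rw [hnm, hfn, hfj, ← hch]
  have hC0 : (((n - 1).choose j : ℚ)) ≠ 0 :=
    Nat.cast_ne_zero.mpr (Nat.choose_pos (by omega : j ≤ n - 1)).ne'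
  have hj1 : ((j : ℚ) + 1) ≠ 0 := by positivity
  have hfj0 : ((j.factorial : ℚ)) ≠ 0 := by positivity
  have hfnj0 : (((n - 1 - j).factorial : ℚ)) ≠ 0 := by positivity
  push_cast
  field_simp

/-- For any rational `μ ≠ 0`, if `A(x)` satisfies `A(x) = x e^{A(x)}`
(with `A(0) = 0`), then `(A(x)/x)^μ = Σ_{n≥0} μ (μ+n)^(n-1) x^n / n!`, where
`F^μ := exp(μ log F)` for a series `F` with constant term `1`.
(Note `(μ+n)^(n-1)` is interpreted with the integer exponent `n - 1 ∈ ℤ`, so that the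
`n = 0` term is `μ · μ⁻¹ = 1`.) -/
theorem tree_series_rational_power (μ : ℚ) (hμ : μ ≠ 0) (A : PowerSeries ℚ)
    (hA0 : PowerSeries.constantCoeff A = 0) (hA : A = PowerSeries.X * expS A) :
    expS (μ • logS (PowerSeries.mk fun n => PowerSeries.coeff (n + 1) A)) =
      PowerSeries.mk fun n => μ * (μ + (n : ℚ)) ^ ((n : ℤ) - 1) / (n.factorial : ℚ) := by
  have hB : (PowerSeries.mk fun n => PowerSeries.coeff (n + 1) A) = expS A := by
    ext n
    rw [coeff_mk]
    conv_lhs => rw [hA]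
    rw [coeff_succ_X_mul]
  rw [hB, logS_expS A hA0]
  ext n
  rw [coeff_mk, main_coeff A hA0 hA n μ hμ]
end KGonal2Trees
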